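/- Let X be a metric space, {V₁,…,V_p} a family of subsets, and φ₁,…,φ_p : X → [0,1] functions such that each φ_i is supported in V_i, is (4/r_i)-Lipschitz, at each point at most N+1 of the φ_i are nonzero, and Σφ_i ≥ 1 everywhere. Then there is a constant L_N depending only on N such that the map f = (Σφ_i)⁻¹(φ₁,…,φ_p) : X → Δ^{p−1} ⊂ ℝ^p restricted to any V_k on which r_j ≥ (3/4)·r_k for every j with V_j ∩ V_k ≠ ∅ is (L_N/r_k)-Lipschitz. -/

import Mathlib

open scoped Classical

/-- Lemma 4.9 (lem:boundlip).  Given a partition-of-unity-type family `φ_i` supported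
in `V_i`, each `(4/r_i)`-Lipschitz, with at most `N+1` of them nonzero at any point and
`Σφ_i ≥ 1`, there is a constant `L_N` depending only on `N` such that the map
`f = (Σφ_i)⁻¹(φ₁,…,φ_p) : X → Δ^{p−1} ⊂ ℝ^p` is `(L_N/r_k)`-Lipschitz on each `V_k`
all of whose neighbours satisfy `r_j ≥ (3/4) r_k`. -/
theorem stmt9 (N : ℕ) :
    ∃ L : ℝ, 0 < L ∧
      ∀ (X : Type) (_ : MetricSpace X) (p : ℕ)
        (V : Fin p → Set X) (r : Fin p → ℝ) (φ : Fin p → X → ℝ),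
        (∀ i, 0 < r i) →
        (∀ i x, φ i x ∈ Set.Icc (0 : ℝ) 1) →
        (∀ i, Function.support (φ i) ⊆ V i) →
        (∀ i, LipschitzWith (Real.toNNReal (4 / r i)) (φ i)) →
        (∀ x : X, (Finset.univ.filter fun i => φ i x ≠ 0).card ≤ N + 1) →
        (∀ x : X, 1 ≤ ∑ i, φ i x) →
        ∀ k : Fin p, (∀ j, (V j ∩ V k).Nonempty → 3 / 4 * r k ≤ r j) →
          LipschitzOnWith (Real.toNNReal (L / r k))
            (fun x => (EuclideanSpace.equiv (Fin p) ℝ).symm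
              (fun i => φ i x / ∑ j, φ j x)) (V k) := by
  refine ⟨16/3 * (2*(N:ℝ)+2) * (2*(N:ℝ)+3), by positivity, ?_⟩
  intro X _ p V r φ hr hφ01 hsupp hlip hcard hsum k hnb
  set L : ℝ := 16/3 * (2*(N:ℝ)+2) * (2*(N:ℝ)+3) with hLdef
  have hrk := hr k
  have hLrk : 0 ≤ L / r k := by positivity
  rw [lipschitzOnWith_iff_dist_le_mul]
  intro x hx y hy
  rw [Real.coe_toNNReal _ hLrk]
  set S : X → ℝ := fun z => ∑ j, φ j z with hSdef
  have hS1 : ∀ z, (1:ℝ) ≤ S z := hsum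
  have hSpos : ∀ z, (0:ℝ) < S z := fun z => lt_of_lt_of_le one_pos (hS1 z)
  set A : Finset (Fin p) :=
    (Finset.univ.filter fun i => φ i x ≠ 0) ∪ (Finset.univ.filter fun i => φ i y ≠ 0) with hA
  have hAcard : (A.card : ℝ) ≤ 2*(N:ℝ)+2 := by
    have h1 := Finset.card_union_le (Finset.univ.filter fun i => φ i x ≠ 0)
        (Finset.univ.filter fun i => φ i y ≠ 0)
    have h2 : A.card ≤ (N+1) + (N+1) := le_trans h1 (add_le_add (hcard x) (hcard y))
    calc (A.card : ℝ) ≤ (((N+1)+(N+1) : ℕ) : ℝ) := by exact_mod_cast h2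
      _ = 2*(N:ℝ)+2 := by push_cast; ring
  have hzero : ∀ i, i ∉ A → φ i x = 0 ∧ φ i y = 0 := by
    intro i hi
    simp only [hA, Finset.mem_union, Finset.mem_filter, Finset.mem_univ, true_and, not_or,
      not_not] at hi
    exact hi
  set b : ℝ := 16/(3 * r k) * dist x y with hbdef
  have hbnn : 0 ≤ b := by positivity
  have hb : ∀ i ∈ A, |φ i x - φ i y| ≤ b := by
    intro i hi
    have hmeet : (V i ∩ V k).Nonempty := by
      simp only [hA, Finset.mem_union, Finset.mem_filter, Finset.mem_univ, true_and] at hi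
      rcases hi with h | h
      · exact ⟨x, hsupp i h, hx⟩
      · exact ⟨y, hsupp i h, hy⟩
    have hri : 3/4 * r k ≤ r i := hnb i hmeet
    have hripos := hr i
    have h1 : dist (φ i x) (φ i y) ≤ (4 / r i) * dist x y := by
      have h := (hlip i).dist_le_mul x y
      rwa [Real.coe_toNNReal _ (by positivity)] at h
    have h2 : 4 / r i ≤ 16 / (3 * r k) := by
      rw [div_le_div_iff₀ hripos (by positivity)]
      nlinarith
    calc |φ i x - φ i y| = dist (φ i x) (φ i y) := (Real.dist_eq _ _).symm
      _ ≤ (4 / r i) * dist x y := h1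
      _ ≤ b := mul_le_mul_of_nonneg_right h2 dist_nonneg
  have hSdiff : |S x - S y| ≤ (2*(N:ℝ)+2) * b := by
    have h1 : S x - S y = ∑ i ∈ A, (φ i x - φ i y) := by
      rw [hSdef]
      simp only
      rw [← Finset.sum_sub_distrib]
      refine (Finset.sum_subset (Finset.subset_univ A) ?_).symm
      intro i _ hi
      rcases hzero i hi with ⟨e1, e2⟩
      rw [e1, e2, sub_zero]
    rw [h1]
    calc |∑ i ∈ A, (φ i x - φ i y)| ≤ ∑ i ∈ A, |φ i x - φ i y| :=
          Finset.abs_sum_le_sum_abs _ _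
      _ ≤ ∑ _i ∈ A, b := Finset.sum_le_sum hb
      _ = A.card * b := by rw [Finset.sum_const, nsmul_eq_mul]
      _ ≤ (2*(N:ℝ)+2) * b := mul_le_mul_of_nonneg_right hAcard hbnn
  set g : X → Fin p → ℝ := fun z i => φ i z / S z with hg
  have hcoord : ∀ i, |g x i - g y i| ≤ |φ i x - φ i y| + |S x - S y| := by
    intro i
    have hSx := hSpos x; have hSy := hSpos y
    have hφyS : φ i y ≤ S y :=
      Finset.single_le_sum (fun j _ => (hφ01 j y).1) (Finset.mem_univ i)
    have key : φ i x / S x - φ i y / S y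
        = (φ i x - φ i y)/S x + (φ i y / S y) * ((S y - S x)/S x) := by
      have hx0 : S x ≠ 0 := hSx.ne'
      have hy0 : S y ≠ 0 := hSy.ne'
      clear_value S
      field_simp
      ring
    have e1 : |(φ i x - φ i y)/S x| ≤ |φ i x - φ i y| := by
      rw [abs_div, abs_of_pos hSx]
      exact div_le_self (abs_nonneg _) (hS1 x)
    have e2 : |(φ i y / S y) * ((S y - S x)/S x)| ≤ |S x - S y| := by
      rw [abs_mul]
      have t1 : |φ i y / S y| ≤ 1 := by
        rw [abs_of_nonneg (div_nonneg (hφ01 i y).1 hSy.le)]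
        exact div_le_one_of_le₀ hφyS hSy.le
      have t2 : |(S y - S x)/S x| ≤ |S x - S y| := by
        rw [abs_div, abs_of_pos hSx, abs_sub_comm]
        exact div_le_self (abs_nonneg _) (hS1 x)
      calc |φ i y / S y| * |(S y - S x)/S x| ≤ 1 * |S x - S y| :=
            mul_le_mul t1 t2 (abs_nonneg _) zero_le_one
        _ = |S x - S y| := one_mul _
    calc |g x i - g y i|
        = |(φ i x - φ i y)/S x + (φ i y / S y) * ((S y - S x)/S x)| := by
          show |φ i x / S x - φ i y / S y| = _
          rw [key]
      _ ≤ |(φ i x - φ i y)/S x| + |(φ i y / S y) * ((S y - S x)/S x)| := abs_add_le _ _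
      _ ≤ |φ i x - φ i y| + |S x - S y| := add_le_add e1 e2
  have hgzero : ∀ i, i ∉ A → g x i = g y i := by
    intro i hi
    rcases hzero i hi with ⟨e1, e2⟩
    simp [hg, e1, e2]
  have hdist_eq : dist ((EuclideanSpace.equiv (Fin p) ℝ).symm (fun i => φ i x / ∑ j, φ j x))
      ((EuclideanSpace.equiv (Fin p) ℝ).symm (fun i => φ i y / ∑ j, φ j y))
      = Real.sqrt (∑ i, dist (g x i) (g y i) ^ 2) := by
    rw [EuclideanSpace.dist_eq]
    rfl
  rw [hdist_eq]
  have hsum_eq : ∑ i, dist (g x i) (g y i) ^ 2 = ∑ i ∈ A, dist (g x i) (g y i) ^ 2 := by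
    refine (Finset.sum_subset (Finset.subset_univ A) ?_).symm
    intro i _ hi
    rw [hgzero i hi, dist_self]
    norm_num
  rw [hsum_eq]
  have hsqrt : Real.sqrt (∑ i ∈ A, dist (g x i) (g y i) ^ 2)
      ≤ ∑ i ∈ A, dist (g x i) (g y i) := by
    have h1 : ∑ i ∈ A, dist (g x i) (g y i) ^ 2 ≤ (∑ i ∈ A, dist (g x i) (g y i)) ^ 2 :=
      Finset.sum_sq_le_sq_sum_of_nonneg (fun i _ => dist_nonneg)
    calc Real.sqrt (∑ i ∈ A, dist (g x i) (g y i) ^ 2)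
        ≤ Real.sqrt ((∑ i ∈ A, dist (g x i) (g y i)) ^ 2) := Real.sqrt_le_sqrt h1
      _ = ∑ i ∈ A, dist (g x i) (g y i) :=
          Real.sqrt_sq (Finset.sum_nonneg fun i _ => dist_nonneg)
  refine hsqrt.trans ?_
  have hfinal : ∑ i ∈ A, dist (g x i) (g y i) ≤ (2*(N:ℝ)+2) * ((2*(N:ℝ)+3) * b) := by
    calc ∑ i ∈ A, dist (g x i) (g y i)
        ≤ ∑ _i ∈ A, (2*(N:ℝ)+3) * b := by
          refine Finset.sum_le_sum fun i hi => ?_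
          calc dist (g x i) (g y i) = |g x i - g y i| := Real.dist_eq _ _
            _ ≤ |φ i x - φ i y| + |S x - S y| := hcoord i
            _ ≤ b + (2*(N:ℝ)+2) * b := add_le_add (hb i hi) hSdiff
            _ = (2*(N:ℝ)+3) * b := by ring
      _ = A.card * ((2*(N:ℝ)+3) * b) := by rw [Finset.sum_const, nsmul_eq_mul]
      _ ≤ (2*(N:ℝ)+2) * ((2*(N:ℝ)+3) * b) :=
          mul_le_mul_of_nonneg_right hAcard (by positivity)
  refine hfinal.trans (le_of_eq ?_)
  rw [hbdef, hLdef]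
  field_simp
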